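/- arXiv:2112.08822 — 2 statements merged into one kernel-verified Lean document; each statement's English description precedes it below -/
import Mathlib

section
/- For every α ≥ 1 and every r ∈ (0,1), the quantity f_α(r) := Σ_{j=0}^{⌈(1-r)/(2r)⌉ - 1} [((2j+2)/(1+r))^α − ((2j)/(1−r))^α] satisfies 0 < f_α(r) ≤ r^{−α}. -/
open Finset

/-- f_α(r) = Σ_{j=0}^{⌈(1-r)/(2r)⌉-1} (((2j+2)/(1+r))^α − ((2j)/(1−r))^α). -/
noncomputable def levyF (α r : ℝ) : ℝ :=
  ∑ j ∈ Finset.range ⌈(1 - r) / (2 * r)⌉₊,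
    (((2 * (j : ℝ) + 2) / (1 + r)) ^ α - ((2 * (j : ℝ)) / (1 - r)) ^ α)

/-- For α ≥ 1 and r ∈ (0,1), one has 0 < f_α(r) ≤ r^{−α}. -/
theorem levyF_pos_le (α r : ℝ) (hα : 1 ≤ α) (hr0 : 0 < r) (hr1 : r < 1) :
    0 < levyF α r ∧ levyF α r ≤ r ^ (-α) := by
  have hα0 : 0 < α := lt_of_lt_of_le one_pos hα
  set N := ⌈(1 - r) / (2 * r)⌉₊ with hNdef
  have hx : 0 < (1 - r) / (2 * r) := div_pos (by linarith) (by linarith)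
  have hNpos : 0 < N := Nat.ceil_pos.mpr hx
  constructor
  · apply Finset.sum_pos
    · intro j hj
      have hj' : (j : ℝ) < (1 - r) / (2 * r) := Nat.lt_ceil.mp (Finset.mem_range.mp hj)
      have hj'' : (j : ℝ) * (2 * r) < 1 - r := (lt_div_iff₀ (by linarith)).mp hj'
      have hlt : (2 * (j : ℝ)) / (1 - r) < (2 * (j : ℝ) + 2) / (1 + r) := by
        rw [div_lt_div_iff₀ (by linarith) (by linarith)]
        nlinarith
      have h0 : 0 ≤ (2 * (j : ℝ)) / (1 - r) := div_nonneg (by positivity) (by linarith)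
      have := Real.rpow_lt_rpow h0 hlt hα0
      linarith
    · exact ⟨0, Finset.mem_range.mpr hNpos⟩
  · have key : levyF α r ≤ ∑ j ∈ Finset.range N,
        (((2 * ((j + 1 : ℕ) : ℝ)) / (1 + r)) ^ α - ((2 * (j : ℝ)) / (1 + r)) ^ α) := by
      apply Finset.sum_le_sum
      intro j _
      have h1 : ((2 * (j : ℝ)) / (1 + r)) ^ α ≤ ((2 * (j : ℝ)) / (1 - r)) ^ α := by
        apply Real.rpow_le_rpow (by positivity) _ hα0.le
        apply div_le_div_of_nonneg_left (by positivity) (by linarith) (by linarith)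
      have h2 : (2 * ((j + 1 : ℕ) : ℝ)) / (1 + r) = (2 * (j : ℝ) + 2) / (1 + r) := by
        push_cast; ring_nf
      rw [h2]
      linarith
    have tel : ∑ j ∈ Finset.range N,
        (((2 * ((j + 1 : ℕ) : ℝ)) / (1 + r)) ^ α - ((2 * (j : ℝ)) / (1 + r)) ^ α)
        = ((2 * (N : ℝ)) / (1 + r)) ^ α - ((2 * ((0 : ℕ) : ℝ)) / (1 + r)) ^ α :=
      Finset.sum_range_sub (fun k : ℕ => ((2 * (k : ℝ)) / (1 + r)) ^ α) N
    have hzero : ((2 * ((0 : ℕ) : ℝ)) / (1 + r)) ^ α = 0 := by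
      norm_num [Real.zero_rpow hα0.ne']
    have hNlt : (N : ℝ) < (1 - r) / (2 * r) + 1 := Nat.ceil_lt_add_one hx.le
    have hdivlt : (1 - r) / (2 * r) * (2 * r) = 1 - r := by
      field_simp
    have hbound : (2 * (N : ℝ)) / (1 + r) ≤ r⁻¹ := by
      rw [div_le_iff₀ (by linarith), inv_mul_eq_div, le_div_iff₀ hr0]
      nlinarith
    have hfinal : ((2 * (N : ℝ)) / (1 + r)) ^ α ≤ (r⁻¹) ^ α :=
      Real.rpow_le_rpow (by positivity) hbound hα0.le
    have hrinv : (r⁻¹ : ℝ) ^ α = r ^ (-α) := by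
      rw [Real.rpow_neg hr0.le, Real.inv_rpow hr0.le]
    calc levyF α r ≤ _ := key
      _ = _ := tel
      _ = ((2 * (N : ℝ)) / (1 + r)) ^ α := by rw [hzero]; ring
      _ ≤ (r⁻¹) ^ α := hfinal
      _ = r ^ (-α) := hrinv
end

section
/- As r → 0⁺, f_α(r) is asymptotically equivalent to 1/((α+1) r^α), i.e., lim_{r→0⁺} (α+1) r^α f_α(r) = 1. -/
open Filter

open Real Finset Topology in
private lemma key1 {α : ℝ} (hα : 1 ≤ α) {x : ℝ} (hx : 0 ≤ x) :
    (α + 1) * x ^ α ≤ (x + 1) ^ (α + 1) - x ^ (α + 1) := by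
  rcases eq_or_lt_of_le hx with rfl | hx
  · rw [Real.zero_rpow (by linarith), Real.zero_rpow (by linarith)]
    norm_num
  · have h1 : (-1 : ℝ) ≤ 1 / x := (one_div_nonneg.mpr hx.le).trans' (by norm_num)
    have hb := one_add_mul_self_le_rpow_one_add h1 (p := α + 1) (by linarith)
    have hx1 : (1 : ℝ) + 1 / x = (x + 1) / x := by field_simp
    rw [hx1, Real.div_rpow (by linarith) hx.le] at hb
    have hxp : (0:ℝ) < x ^ (α + 1) := Real.rpow_pos_of_pos hx _
    rw [le_div_iff₀ hxp] at hb
    have h3 : x ^ (α + 1) = x ^ α * x := Real.rpow_add_one hx.ne' α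
    have hb2 : x ^ (α+1) + (α+1) * x ^ α ≤ (x+1) ^ (α+1) := by
      refine le_trans (le_of_eq ?_) hb
      rw [h3]; field_simp
    linarith


open Real Finset Topology in
private lemma key2 {α : ℝ} (hα : 1 ≤ α) {x : ℝ} (hx : 0 ≤ x) :
    (x + 1) ^ (α + 1) - x ^ (α + 1) ≤ (α + 1) * (x + 1) ^ α := by
  set y := x + 1 with hy
  have hy1 : (1:ℝ) ≤ y := by simp [hy]; linarith
  have hy0 : (0:ℝ) < y := by linarith
  have h1 : (-1 : ℝ) ≤ -1 / y := by
    rw [neg_div, neg_le_neg_iff]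
    exact (div_le_one hy0).2 hy1
  have hb := one_add_mul_self_le_rpow_one_add h1 (p := α + 1) (by linarith)
  have hx1 : (1 : ℝ) + -1 / y = x / y := by field_simp [hy]; linarith
  rw [hx1, Real.div_rpow hx hy0.le] at hb
  have hxp : (0:ℝ) < y ^ (α + 1) := Real.rpow_pos_of_pos hy0 _
  rw [le_div_iff₀ hxp] at hb
  have h3 : y ^ (α + 1) = y ^ α * y := Real.rpow_add_one hy0.ne' α
  have hb2 : y ^ (α+1) - (α+1) * y ^ α ≤ x ^ (α+1) := by
    refine le_trans (le_of_eq ?_) hb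
    rw [h3]; field_simp; ring
  linarith

open Real Finset Topology in
private lemma sum_upper  {α : ℝ} (hα : 1 ≤ α) (N : ℕ) :
    ∑ j ∈ range N, (j : ℝ) ^ α ≤ (N : ℝ) ^ (α + 1) / (α + 1) := by
  have hα1 : (0:ℝ) < α + 1 := by linarith
  induction N with
  | zero => simp [Real.zero_rpow (by linarith : α + 1 ≠ 0)]
  | succ n ih =>
    rw [Finset.sum_range_succ]
    have hk := key1 hα (x := (n:ℝ)) (Nat.cast_nonneg n)
    have : ((n:ℝ) + 1) = ((n+1 : ℕ) : ℝ) := by push_cast; ring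
    rw [this] at hk
    have ih2 : (∑ j ∈ range n, (j:ℝ)^α) * (α+1) ≤ (n:ℝ)^(α+1) := (le_div_iff₀ hα1).mp ih
    rw [le_div_iff₀ hα1]
    nlinarith


open Real Finset Topology in
private lemma sum_lower {α : ℝ} (hα : 1 ≤ α) (N : ℕ) (hN : 1 ≤ N) :
    ((N : ℝ) - 1) ^ (α + 1) / (α + 1) ≤ ∑ j ∈ range N, (j : ℝ) ^ α := by
  have hα1 : (0:ℝ) < α + 1 := by linarith
  induction N, hN using Nat.le_induction with
  | base => simp [Real.zero_rpow (by linarith : α + 1 ≠ 0), Real.zero_rpow (by linarith : α ≠ 0)]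
  | succ n hn ih =>
    rw [Finset.sum_range_succ]
    have hn1 : (1:ℝ) ≤ (n:ℝ) := by exact_mod_cast hn
    have hk := key2 hα (x := (n:ℝ) - 1) (by linarith)
    rw [sub_add_cancel] at hk
    have hle : ((n:ℝ) + 1 - 1) ^ (α+1) / (α+1) ≤ ((n:ℝ)-1)^(α+1)/(α+1) + (n:ℝ)^α := by
      rw [add_sub_cancel_right, div_add' _ _ _ hα1.ne', div_le_div_iff₀ hα1 hα1]
      nlinarith
    push_cast
    linarith [ih]

open Real Finset Topology in
private lemma sum_formula {α : ℝ} (hα : 1 ≤ α) {r : ℝ} (hr : 0 < r) (hr1 : r < 1) :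
    levyF α r = (2/(1+r)) ^ α * ((⌈(1 - r) / (2 * r)⌉₊ : ℝ)) ^ α
      + ((2/(1+r)) ^ α - (2/(1-r)) ^ α) * ∑ j ∈ range ⌈(1 - r) / (2 * r)⌉₊, (j : ℝ) ^ α := by
  set N := ⌈(1 - r) / (2 * r)⌉₊ with hN
  have h1r : (0:ℝ) < 1 + r := by linarith
  have h1r' : (0:ℝ) < 1 - r := by linarith
  have hc1 : (0:ℝ) ≤ 2/(1+r) := by positivity
  have hc2 : (0:ℝ) ≤ 2/(1-r) := div_nonneg (by norm_num) h1r'.le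
  have hshift : ∑ j ∈ range N, ((j:ℝ)+1)^α = (∑ j ∈ range N, (j:ℝ)^α) + (N:ℝ)^α := by
    have h := Finset.sum_range_succ' (fun k : ℕ => (k:ℝ)^α) N
    have h2 := Finset.sum_range_succ (fun k : ℕ => (k:ℝ)^α) N
    simp only [Nat.cast_add, Nat.cast_one, Nat.cast_zero] at h h2
    rw [Real.zero_rpow (by linarith : α ≠ 0)] at h
    have : ∑ j ∈ range N, ((j:ℝ)+1)^α = ∑ x ∈ range N, ((x:ℝ)+1)^α := rfl
    linarith [h, h2]
  unfold levyF
  rw [← hN]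
  calc ∑ j ∈ range N, (((2*(j:ℝ)+2)/(1+r))^α - ((2*(j:ℝ))/(1-r))^α)
      = ∑ j ∈ range N, ((2/(1+r))^α * ((j:ℝ)+1)^α - (2/(1-r))^α * (j:ℝ)^α) := by
        refine Finset.sum_congr rfl fun j _ => ?_
        rw [← Real.mul_rpow hc1 (by positivity), ← Real.mul_rpow hc2 (Nat.cast_nonneg j)]
        have e1 : (2*(j:ℝ)+2)/(1+r) = 2/(1+r) * ((j:ℝ)+1) := by field_simp
        have e2 : (2*(j:ℝ))/(1-r) = 2/(1-r) * (j:ℝ) := by field_simp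
        rw [e1, e2]
    _ = (2/(1+r))^α * ∑ j ∈ range N, ((j:ℝ)+1)^α
        - (2/(1-r))^α * ∑ j ∈ range N, (j:ℝ)^α := by
        rw [Finset.sum_sub_distrib, Finset.mul_sum, Finset.mul_sum]
    _ = _ := by rw [hshift]; ring

open Real Finset Topology in
private lemma eq_lemma {α r : ℝ} (hα : 1 ≤ α) (hr : 0 < r) (hr1 : r < 1/2) :
    (α+1) * r^α * levyF α r
    = (α+1) * (2*r*(⌈(1-r)/(2*r)⌉₊:ℝ)/(1+r))^α
      + (α+1) * (((1+r)^(-α) - (1-r)^(-α))/r)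
        * ((2*r)^(α+1) * ∑ j ∈ range ⌈(1-r)/(2*r)⌉₊, (j:ℝ)^α) / 2 := by
  have h1 : (0:ℝ) < 1 + r := by linarith
  have h2 : (0:ℝ) < 1 - r := by linarith
  rw [sum_formula hα hr (by linarith)]
  set n : ℝ := (⌈(1-r)/(2*r)⌉₊ : ℝ) with hn
  set S : ℝ := ∑ j ∈ range ⌈(1-r)/(2*r)⌉₊, (j:ℝ)^α with hS
  have hn0 : 0 ≤ n := Nat.cast_nonneg _
  have e1 : (2*r*n/(1+r))^α = 2^α * (r^α * n^α) / (1+r)^α := by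
    rw [Real.div_rpow (by positivity) h1.le, Real.mul_rpow (by positivity) hn0,
      Real.mul_rpow (by norm_num) hr.le]
    ring
  have e2 : (2/(1+r))^α = 2^α/(1+r)^α := Real.div_rpow (by norm_num) h1.le α
  have e3 : (2/(1-r))^α = 2^α/(1-r)^α := Real.div_rpow (by norm_num) h2.le α
  have e4 : (2*r)^(α+1) = 2^α * r^α * (2*r) := by
    rw [Real.rpow_add_one (by positivity), Real.mul_rpow (by norm_num) hr.le]
  have e5 : (1+r)^(-α) = 1/(1+r)^α := by rw [Real.rpow_neg h1.le, one_div]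
  have e6 : (1-r)^(-α) = 1/(1-r)^α := by rw [Real.rpow_neg h2.le, one_div]
  rw [e1, e2, e3, e4, e5, e6]
  have p1 : (0:ℝ) < (1+r)^α := Real.rpow_pos_of_pos h1 α
  have p2 : (0:ℝ) < (1-r)^α := Real.rpow_pos_of_pos h2 α
  field_simp

open Real Finset Topology in
/-- As r → 0⁺, f_α(r) ~ 1/((α+1) r^α), i.e. (α+1) r^α f_α(r) → 1. -/
theorem levyF_asymptotic (α : ℝ) (hα : 1 ≤ α) :
    Tendsto (fun r : ℝ => (α + 1) * r ^ α * levyF α r)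
      (nhdsWithin 0 (Set.Ioi 0)) (nhds 1) := by
  have hα1 : (0:ℝ) < α + 1 := by linarith
  set l := nhdsWithin (0:ℝ) (Set.Ioi 0) with hl
  have hfacts : ∀ᶠ r in l, 0 < r ∧ r < 1/4 := by
    filter_upwards [Ioo_mem_nhdsGT (by norm_num : (0:ℝ) < 1/4)] with r hr
    exact ⟨hr.1, hr.2⟩
  -- bounds on the ceiling
  have hNb : ∀ r : ℝ, 0 < r → r < 1/4 →
      (1 - r ≤ 2*r*(⌈(1-r)/(2*r)⌉₊:ℝ) ∧ 2*r*(⌈(1-r)/(2*r)⌉₊:ℝ) ≤ 1 + r ∧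
        1 ≤ ⌈(1-r)/(2*r)⌉₊) := by
    intro r hr hr4
    have h2r : (0:ℝ) < 2*r := by linarith
    have hpos : (0:ℝ) < (1-r)/(2*r) := div_pos (by linarith) h2r
    have hle := (div_le_iff₀ h2r).mp (Nat.le_ceil ((1-r)/(2*r)))
    have hceil := Nat.ceil_lt_add_one hpos.le
    have heq : (1-r)/(2*r) + 1 = (1+r)/(2*r) := by field_simp; ring
    rw [heq] at hceil
    have hub := (lt_div_iff₀ h2r).mp hceil
    refine ⟨by nlinarith, by nlinarith, Nat.one_le_ceil_iff.mpr hpos⟩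
  -- limit of 2 r N / (1+r)
  have hlow : Tendsto (fun r : ℝ => (1-r)/(1+r)) l (𝓝 1) := by
    have hc : ContinuousAt (fun r : ℝ => (1-r)/(1+r)) 0 :=
      ContinuousAt.div (by fun_prop) (by fun_prop) (by norm_num)
    have h := hc.tendsto
    norm_num at h
    exact h.mono_left nhdsWithin_le_nhds
  have hu : Tendsto (fun r : ℝ => 2*r*(⌈(1-r)/(2*r)⌉₊:ℝ)/(1+r)) l (𝓝 1) := by
    refine tendsto_of_tendsto_of_tendsto_of_le_of_le' hlow tendsto_const_nhds ?_ ?_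
    · filter_upwards [hfacts] with r hr
      have h1r : (0:ℝ) < 1 + r := by linarith [hr.1]
      exact div_le_div_of_nonneg_right ((hNb r hr.1 hr.2).1) h1r.le |>.trans_eq rfl
    · filter_upwards [hfacts] with r hr
      have h1r : (0:ℝ) < 1 + r := by linarith [hr.1]
      exact (div_le_one h1r).mpr (hNb r hr.1 hr.2).2.1
  have hrpow1 : ContinuousAt (fun x : ℝ => x ^ α) 1 :=
    Real.continuousAt_rpow_const 1 α (Or.inl one_ne_zero)
  have hA : Tendsto (fun r : ℝ => (α+1) * (2*r*(⌈(1-r)/(2*r)⌉₊:ℝ)/(1+r))^α) l (𝓝 (α+1)) := by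
    have h := hrpow1.tendsto.comp hu
    rw [Real.one_rpow] at h
    have h2 := tendsto_const_nhds (x := α+1) (f := l) |>.mul h
    norm_num at h2
    exact h2
  -- derivative piece
  have hd1 : HasDerivAt (fun r : ℝ => (1+r)^(-α)) (-α) 0 := by
    have inner : HasDerivAt (fun r : ℝ => 1 + r) 1 0 := by
      simpa using (hasDerivAt_id (0:ℝ)).const_add 1
    have h := inner.rpow_const (p := -α) (Or.inl (by norm_num))
    convert h using 1
    norm_num
  have hd2 : HasDerivAt (fun r : ℝ => (1-r)^(-α)) α 0 := by
    have inner : HasDerivAt (fun r : ℝ => 1 - r) (-1) 0 := by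
      simpa using (hasDerivAt_id (0:ℝ)).const_sub 1
    have h := inner.rpow_const (p := -α) (Or.inl (by norm_num))
    convert h using 1
    norm_num
  have hg : HasDerivAt (fun r : ℝ => (1+r)^(-α) - (1-r)^(-α)) (-(2*α)) 0 := by
    have h := hd1.sub hd2
    rw [show -(2*α) = -α - α by ring]
    exact h
  have h1 : Tendsto (fun r : ℝ => ((1+r)^(-α) - (1-r)^(-α))/r) l (𝓝 (-(2*α))) := by
    have hs := hasDerivAt_iff_tendsto_slope.mp hg
    have hmono : l ≤ nhdsWithin (0:ℝ) {(0:ℝ)}ᶜ :=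
      nhdsWithin_mono 0 (fun x hx => ne_of_gt hx)
    refine (hs.mono_left hmono).congr fun r => ?_
    rw [slope_def_field]
    norm_num
  -- squeeze for (2r)^(α+1) * S
  have hconst : Tendsto (fun _ : ℝ => (1:ℝ)/(α+1)) l (𝓝 (1/(α+1))) := tendsto_const_nhds
  have hrpow2 : ContinuousAt (fun x : ℝ => x ^ (α+1)) 1 :=
    Real.continuousAt_rpow_const 1 (α+1) (Or.inl one_ne_zero)
  have hlim_lin : ∀ c : ℝ, Tendsto (fun r : ℝ => (1+c*r)^(α+1)/(α+1)) l (𝓝 (1/(α+1))) := by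
    intro c
    have hin : Tendsto (fun r : ℝ => 1+c*r) l (𝓝 1) := by
      have hc : ContinuousAt (fun r : ℝ => 1+c*r) 0 := by fun_prop
      have h := hc.tendsto
      norm_num at h
      exact h.mono_left nhdsWithin_le_nhds
    have h := (hrpow2.tendsto.comp hin).div_const (α+1)
    rw [Real.one_rpow] at h
    exact h
  have h2 : Tendsto (fun r : ℝ => (2*r)^(α+1) * ∑ j ∈ range ⌈(1-r)/(2*r)⌉₊, (j:ℝ)^α)
      l (𝓝 (1/(α+1))) := by
    refine tendsto_of_tendsto_of_tendsto_of_le_of_le'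
      (hlim_lin (-3)) (hlim_lin 1) ?_ ?_
    · filter_upwards [hfacts] with r hr
      obtain ⟨hlb, hub, hN1⟩ := hNb r hr.1 hr.2
      set N := ⌈(1-r)/(2*r)⌉₊
      have hN1' : (1:ℝ) ≤ (N:ℝ) := by exact_mod_cast hN1
      have h2r : (0:ℝ) ≤ 2*r := by linarith [hr.1]
      have hs := sum_lower hα N hN1
      have e : (2*r)^(α+1) * (((N:ℝ)-1)^(α+1)/(α+1)) = (2*r*((N:ℝ)-1))^(α+1)/(α+1) := by
        rw [Real.mul_rpow h2r (by linarith), mul_div_assoc]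
      have hge : (1-3*r)^(α+1) ≤ (2*r*((N:ℝ)-1))^(α+1) := by
        apply Real.rpow_le_rpow (by linarith [hr.2]) (by nlinarith) (by linarith)
      calc (1+(-3)*r)^(α+1)/(α+1) = (1-3*r)^(α+1)/(α+1) := by ring_nf
        _ ≤ (2*r*((N:ℝ)-1))^(α+1)/(α+1) := by
            exact div_le_div_of_nonneg_right hge hα1.le |>.trans_eq rfl
        _ = (2*r)^(α+1) * (((N:ℝ)-1)^(α+1)/(α+1)) := e.symm
        _ ≤ (2*r)^(α+1) * ∑ j ∈ range N, (j:ℝ)^α := by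
            apply mul_le_mul_of_nonneg_left hs (Real.rpow_nonneg h2r _)
    · filter_upwards [hfacts] with r hr
      obtain ⟨hlb, hub, hN1⟩ := hNb r hr.1 hr.2
      set N := ⌈(1-r)/(2*r)⌉₊
      have h2r : (0:ℝ) ≤ 2*r := by linarith [hr.1]
      have hs := sum_upper hα N
      have e : (2*r)^(α+1) * ((N:ℝ)^(α+1)/(α+1)) = (2*r*(N:ℝ))^(α+1)/(α+1) := by
        rw [Real.mul_rpow h2r (Nat.cast_nonneg N), mul_div_assoc]
      have hge : (2*r*(N:ℝ))^(α+1) ≤ (1+r)^(α+1) := by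
        apply Real.rpow_le_rpow (by positivity) hub (by linarith)
      calc (2*r)^(α+1) * ∑ j ∈ range N, (j:ℝ)^α
          ≤ (2*r)^(α+1) * ((N:ℝ)^(α+1)/(α+1)) := by
            apply mul_le_mul_of_nonneg_left hs (Real.rpow_nonneg h2r _)
        _ = (2*r*(N:ℝ))^(α+1)/(α+1) := e
        _ ≤ (1+r)^(α+1)/(α+1) := div_le_div_of_nonneg_right hge hα1.le |>.trans_eq rfl
        _ = (1+1*r)^(α+1)/(α+1) := by ring_nf
  have hB : Tendsto (fun r : ℝ => (α+1) * (((1+r)^(-α) - (1-r)^(-α))/r)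
      * ((2*r)^(α+1) * ∑ j ∈ range ⌈(1-r)/(2*r)⌉₊, (j:ℝ)^α) / 2) l (𝓝 (-α)) := by
    have h := ((tendsto_const_nhds (x := α+1) (f := l)).mul h1).mul h2 |>.div_const 2
    have hv : (α+1) * (-(2*α)) * (1/(α+1)) / 2 = -α := by field_simp
    rw [hv] at h
    exact h
  have hAB := hA.add hB
  rw [show (α+1) + (-α) = (1:ℝ) by ring] at hAB
  refine hAB.congr' ?_
  filter_upwards [hfacts] with r hr
  exact (eq_lemma hα hr.1 (by linarith [hr.2])).symm
end
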